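/- Let B be the Boolean algebra with exactly three atoms a₁, a₂, a₃, let f be the automorphism induced by the cyclic permutation a₁ ↦ a₂ ↦ a₃ ↦ a₁, and let G = {id, f, f²}. Then (B, G) is not an MV-pair: condition (MVP1) fails for a = a₁, b = a₃ᶜ. -/
import Mathlib


/-- An effect algebra: a partial algebra `(α; ⊕, 0, 1)`.  The partial operation is
encoded by a total function `add` together with a definedness predicate `D`. -/
structure EffectAlgebra (α : Type*) where
  D : α → α → Prop
  add : α → α → α
  zero : α
  one : α
  comm_def : ∀ a b, D a b → D b a
  comm : ∀ a b, D a b → add a b = add b a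
  assoc_def₁ : ∀ a b c, D a b → D (add a b) c → D b c
  assoc_def₂ : ∀ a b c, D a b → D (add a b) c → D a (add b c)
  assoc : ∀ a b c, D a b → D (add a b) c → add (add a b) c = add a (add b c)
  orth_exists : ∀ a, ∃! b, D a b ∧ add a b = one
  add_one : ∀ a, D a one → a = zero

namespace EffectAlgebra

variable {α : Type*}
open Classical

/-- The induced order: `a ≤ b` iff `∃ c, a ⊕ c = b`. -/
def le (E : EffectAlgebra α) (a b : α) : Prop := ∃ c, E.D a c ∧ E.add a c = b

/-- The orthosupplement `a'`. -/
noncomputable def orth (E : EffectAlgebra α) (a : α) : α := (E.orth_exists a).choose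

/-- Partial difference: `sub b a = b ⊖ a`, intended for `a ≤ b`. -/
noncomputable def sub (E : EffectAlgebra α) (b a : α) : α :=
  if h : ∃ c, E.D a c ∧ E.add a c = b then h.choose else E.zero

end EffectAlgebra

section BGpair

variable {α : Type*} [BooleanAlgebra α]

/-- `L(a,b) = {a ∧ f(b) : f ∈ G}`. -/
def Lset (G : Subgroup (α ≃o α)) (a b : α) : Set α := {x | ∃ f ∈ G, x = a ⊓ f b}

/-- `L⁺(a,b) = {g(a) ∧ f(b) : f, g ∈ G}`. -/
def Lplus (G : Subgroup (α ≃o α)) (a b : α) : Set α :=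
  {x | ∃ f ∈ G, ∃ g ∈ G, x = g a ⊓ f b}

/-- Condition (MVP1). -/
def MVP1 (G : Subgroup (α ≃o α)) : Prop :=
  ∀ (a b : α) (f : α ≃o α), f ∈ G → a ≤ b → f a ≤ b →
    ∃ h ∈ G, h a = f a ∧ h b = b

/-- Condition (MVP2): every element of `L(a,b)` lies below a maximal element of `L(a,b)`. -/
def MVP2 (G : Subgroup (α ≃o α)) : Prop :=
  ∀ (a b x : α), x ∈ Lset G a b →
    ∃ m ∈ Lset G a b, x ≤ m ∧ ∀ y ∈ Lset G a b, m ≤ y → y = m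

/-- The equivalence `a ∼_G b` iff `f(a) = b` for some `f ∈ G`. -/
def rG (G : Subgroup (α ≃o α)) (a b : α) : Prop := ∃ f ∈ G, f a = b

end BGpair

/-- for the Boolean algebra with three atoms `{0}, {1}, {2}` and the cyclic
group `G = {id, f, f²}` generated by the automorphism `f` induced by the cyclic
permutation of atoms, `(B, G)` is not an MV-pair: (MVP1) fails for `a = a₁ = {0}` and
`b = a₃ᶜ = {2}ᶜ`. -/
theorem stmt15 (f : Set (Fin 3) ≃o Set (Fin 3))
    (hf : ∀ X : Set (Fin 3), f X = (· + 1) '' X) :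
    ({0} : Set (Fin 3)) ≤ ({2} : Set (Fin 3))ᶜ ∧
    f ({0} : Set (Fin 3)) ≤ ({2} : Set (Fin 3))ᶜ ∧
    ¬ ∃ h ∈ Subgroup.zpowers f,
        h ({0} : Set (Fin 3)) = f ({0} : Set (Fin 3)) ∧
        h (({2} : Set (Fin 3))ᶜ) = ({2} : Set (Fin 3))ᶜ := by
  
  have hf0 : f ({0} : Set (Fin 3)) = {1} := by
    rw [hf]; ext x; fin_cases x <;> simp <;> decide
  have hf1 : f ({1} : Set (Fin 3)) = {2} := by
    rw [hf]; ext x; fin_cases x <;> simp <;> decide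
  have hf2 : f ({2} : Set (Fin 3)) = {0} := by
    rw [hf]; ext x; fin_cases x <;> simp <;> decide
  have hb : (({2} : Set (Fin 3))ᶜ) = ({0,1} : Set (Fin 3)) := by
    ext x; fin_cases x <;> simp <;> decide
  have hfb : f (({2} : Set (Fin 3))ᶜ) = ({1,2} : Set (Fin 3)) := by
    rw [hf]; ext x; fin_cases x <;> simp <;> decide
  have hffb : f ({1,2} : Set (Fin 3)) = ({0,2} : Set (Fin 3)) := by
    rw [hf]; ext x; fin_cases x <;> simp <;> decide
  have hf3 : f ^ 3 = 1 := by
    ext X x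
    have : (f^3) X = f (f (f X)) := rfl
    rw [this, hf, hf, hf, Set.image_image, Set.image_image]
    show _ ↔ x ∈ X
    constructor
    · rintro ⟨y, hy, rfl⟩
      show y + 1 + 1 + 1 ∈ X
      have : y + 1 + 1 + 1 = y := by fin_cases y <;> decide
      rwa [this]
    · intro hx
      exact ⟨x, hx, by fin_cases x <;> decide⟩
  refine ⟨by rw [hb]; intro x hx; simp_all, by rw [hf0, hb]; intro x hx; simp_all, ?_⟩
  rintro ⟨h, ⟨n, rfl⟩, h1, h2⟩
  have key : f ^ n = f ^ (n % 3) := by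
    conv_lhs => rw [← Int.emod_add_mul_ediv n 3]
    rw [zpow_add, zpow_mul]
    rw [show ((3:ℤ)) = ((3:ℕ):ℤ) by norm_num, zpow_natCast, hf3, one_zpow, mul_one]
  have hn : n % 3 = 0 ∨ n % 3 = 1 ∨ n % 3 = 2 := by omega
  beta_reduce at h1 h2
  rw [key] at h1 h2
  rcases hn with h' | h' | h' <;> rw [h'] at h1 h2
  · rw [zpow_zero] at h1
    rw [hf0] at h1
    have h1' : ({0}:Set (Fin 3)) = {1} := h1
    have : (0:Fin 3) ∈ ({1}:Set (Fin 3)) := h1' ▸ rfl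
    simp at this
  · rw [zpow_one, hfb, hb] at h2
    have : (0:Fin 3) ∈ ({1,2}:Set (Fin 3)) := h2 ▸ (by simp)
    simp at this
  · have e2 : (f ^ (2:ℤ)) ({0}:Set (Fin 3)) = f (f {0}) := by
      rw [show (2:ℤ) = ((2:ℕ):ℤ) by norm_num, zpow_natCast]
      rfl
    rw [e2, hf0, hf1] at h1
    have : (2:Fin 3) ∈ ({1}:Set (Fin 3)) := h1 ▸ rfl
    simp at this
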